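/- Let ξ be a real random variable with E[ξ] = 0 and E[ξ²] ≤ K₂, and let m > 49 with 7√m/8 - 5K₂ > 0. Then for every z ∈ ℝ, P(|ξ·1_{|ξ|≤m} - z| ≤ 1/16) ≤ max(f₁(m), f₂(m)) where f₁(m) = (m² + 4K₂ - √m)/(m² - √m/8) (valid for |z| ≤ 3/16, assuming E[|ξ|^{3/2}] = 1) and f₂(m) = (m² + 2K₂)/(m² + m/8) (valid for |z| > 3/16). -/

import Mathlib

open MeasureTheory

set_option maxHeartbeats 1000000

private lemma rpow32_eq {x : ℝ} (hx : 0 ≤ x) :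
    x ^ ((3 : ℝ) / 2) = Real.sqrt x ^ 3 := by
  rw [show (3 : ℝ) / 2 = (1 / 2) * 3 by norm_num, Real.rpow_mul hx,
    ← Real.sqrt_eq_rpow, show ((3 : ℝ)) = ((3 : ℕ) : ℝ) by norm_num,
    Real.rpow_natCast]

/-- concentration bound for the truncation `ξ·1_{|ξ|≤m}` of a centered
random variable with `E[|ξ|^{3/2}] = 1` and `E[ξ²] ≤ K₂`:
`P(|ξ₁ - z| ≤ 1/16) ≤ max(f₁(m), f₂(m))` for all `z`, where
`f₁(m) = (m² + 4K₂ - √m)/(m² - √m/8)` and `f₂(m) = (m² + 2K₂)/(m² + m/8)`. -/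
theorem truncated_concentration_bound {Ω : Type*} [MeasurableSpace Ω]
    (μ : Measure Ω) [IsProbabilityMeasure μ]
    (ξ : Ω → ℝ) (hξ : Measurable ξ) (K₂ m : ℝ) (hK₂ : 0 < K₂)
    (hint1 : Integrable ξ μ) (hmean : (∫ ω, ξ ω ∂μ) = 0)
    (h32 : Integrable (fun ω => |ξ ω| ^ ((3 : ℝ) / 2)) μ)
    (h32e : (∫ ω, |ξ ω| ^ ((3 : ℝ) / 2) ∂μ) = 1)
    (hint2 : Integrable (fun ω => ξ ω ^ 2) μ)
    (hvar : (∫ ω, ξ ω ^ 2 ∂μ) ≤ K₂)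
    (hm : 49 < m) (hm2 : 0 < 7 * Real.sqrt m / 8 - 5 * K₂) :
    ∀ z : ℝ,
      (μ {ω | |(if |ξ ω| ≤ m then ξ ω else 0) - z| ≤ 1 / 16}).toReal ≤
        max ((m ^ 2 + 4 * K₂ - Real.sqrt m) / (m ^ 2 - Real.sqrt m / 8))
            ((m ^ 2 + 2 * K₂) / (m ^ 2 + m / 8)) := by
  intro z
  have hm0 : (0 : ℝ) < m := by linarith
  have hsm : 0 < Real.sqrt m := Real.sqrt_pos.2 hm0
  have hsq : Real.sqrt m * Real.sqrt m = m := Real.mul_self_sqrt hm0.le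
  have hsm7 : 7 ≤ Real.sqrt m := by
    nlinarith [Real.sqrt_nonneg m]
  set ξ₁ : Ω → ℝ := fun ω => if |ξ ω| ≤ m then ξ ω else 0 with hξ₁def
  have hmξ₁ : Measurable ξ₁ :=
    Measurable.ite (measurableSet_le hξ.abs measurable_const) hξ measurable_const
  have habsm : ∀ ω, |ξ₁ ω| ≤ m := by
    intro ω
    simp only [hξ₁def]
    split
    · assumption
    · simpa using hm0.le
  have habs : ∀ ω, |ξ₁ ω| ≤ |ξ ω| := by
    intro ω
    simp only [hξ₁def]
    split
    · exact le_refl _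
    · simpa using abs_nonneg _
  have hintξ₁ : Integrable ξ₁ μ :=
    hint1.mono hmξ₁.aestronglyMeasurable
      (Filter.Eventually.of_forall fun ω => by
        simpa [Real.norm_eq_abs] using habs ω)
  set A : Set Ω := {ω | |ξ₁ ω - z| ≤ 1 / 16} with hAdef
  have hA : MeasurableSet A :=
    measurableSet_le (hmξ₁.sub measurable_const).abs measurable_const
  set p : ℝ := (μ A).toReal with hpdef
  have hp0 : 0 ≤ p := ENNReal.toReal_nonneg
  have hp1 : p ≤ 1 := by
    have := prob_le_one (μ := μ) (s := A)
    simpa [hpdef] using ENNReal.toReal_mono (by simp) this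
  have hAc : (μ Aᶜ).toReal = 1 - p := by
    rw [measure_compl hA (measure_ne_top μ A), measure_univ,
      ENNReal.toReal_sub_of_le (prob_le_one) (by simp)]
    simp [hpdef]
  by_cases hz : |z| ≤ 3 / 16
  · -- small z case: use the 3/2 moment
    refine le_trans ?_ (le_max_left _ _)
    set h : Ω → ℝ := fun ω => |ξ₁ ω| ^ ((3 : ℝ) / 2) with hhdef
    have hh_eq : ∀ ω, h ω = Real.sqrt |ξ₁ ω| ^ 3 := fun ω => rpow32_eq (abs_nonneg _)
    have hh_nonneg : ∀ ω, 0 ≤ h ω := fun ω =>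
      Real.rpow_nonneg (abs_nonneg _) _
    have hh_meas : Measurable h := by
      simp only [hhdef]
      fun_prop
    have hh_int : Integrable h μ := by
      refine h32.mono hh_meas.aestronglyMeasurable
        (Filter.Eventually.of_forall fun ω => ?_)
      rw [Real.norm_eq_abs, Real.norm_eq_abs, abs_of_nonneg (hh_nonneg ω),
        abs_of_nonneg (Real.rpow_nonneg (abs_nonneg _) _)]
      exact Real.rpow_le_rpow (abs_nonneg _) (habs ω) (by norm_num)
    -- tail function
    set U : Ω → ℝ := fun ω => if |ξ ω| ≤ m then 0 else |ξ ω| ^ ((3 : ℝ) / 2) with hUdef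
    have hU_meas : Measurable U :=
      Measurable.ite (measurableSet_le hξ.abs measurable_const) measurable_const
        (by fun_prop)
    have hU_int : Integrable U μ := by
      refine h32.mono hU_meas.aestronglyMeasurable
        (Filter.Eventually.of_forall fun ω => ?_)
      simp only [hUdef, Real.norm_eq_abs]
      split
      · simpa using abs_nonneg (|ξ ω| ^ ((3:ℝ)/2))
      · exact le_refl _
    have hsum : ∀ ω, h ω + U ω = |ξ ω| ^ ((3 : ℝ) / 2) := by
      intro ω
      simp only [hhdef, hUdef, hξ₁def]
      split
      · ring
      · rw [abs_zero, Real.zero_rpow (by norm_num)]; ring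
    have hhU : (∫ ω, h ω ∂μ) + (∫ ω, U ω ∂μ) = 1 := by
      rw [← integral_add hh_int hU_int]
      simp_rw [hsum]
      exact h32e
    have hU_le : (∫ ω, U ω ∂μ) ≤ K₂ / Real.sqrt m := by
      have hpt : ∀ ω, U ω ≤ ξ ω ^ 2 / Real.sqrt m := by
        intro ω
        simp only [hUdef]
        split
        · positivity
        · rename_i hc
          push_neg at hc
          have hxpos : 0 < |ξ ω| := lt_trans hm0 hc
          have h1 : Real.sqrt m ≤ Real.sqrt |ξ ω| := Real.sqrt_le_sqrt hc.le
          have h2 : |ξ ω| ^ ((3 : ℝ) / 2) = Real.sqrt |ξ ω| ^ 3 := rpow32_eq (abs_nonneg _)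
          have h3 : Real.sqrt |ξ ω| * Real.sqrt |ξ ω| = |ξ ω| := Real.mul_self_sqrt (abs_nonneg _)
          have h5 : 0 ≤ Real.sqrt |ξ ω| := Real.sqrt_nonneg _
          rw [le_div_iff₀ hsm, h2]
          calc Real.sqrt |ξ ω| ^ 3 * Real.sqrt m
              ≤ Real.sqrt |ξ ω| ^ 3 * Real.sqrt |ξ ω| := by
                exact mul_le_mul_of_nonneg_left h1 (pow_nonneg h5 3)
            _ = (Real.sqrt |ξ ω| * Real.sqrt |ξ ω|) ^ 2 := by ring
            _ = |ξ ω| ^ 2 := by rw [h3]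
            _ = ξ ω ^ 2 := sq_abs _
      calc (∫ ω, U ω ∂μ) ≤ ∫ ω, ξ ω ^ 2 / Real.sqrt m ∂μ :=
            integral_mono hU_int (hint2.div_const _) hpt
        _ = (∫ ω, ξ ω ^ 2 ∂μ) / Real.sqrt m := integral_div _ _
        _ ≤ K₂ / Real.sqrt m := by gcongr
    have hlow : 1 - K₂ / Real.sqrt m ≤ ∫ ω, h ω ∂μ := by linarith
    -- upper bound for ∫ h
    have hsplit : (∫ ω, h ω ∂μ) = (∫ ω in A, h ω ∂μ) + ∫ ω in Aᶜ, h ω ∂μ :=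
      (integral_add_compl hA hh_int).symm
    have hbA : (∫ ω in A, h ω ∂μ) ≤ p * (1 / 8) := by
      have : (∫ ω in A, h ω ∂μ) ≤ ∫ _ in A, (1 / 8 : ℝ) ∂μ := by
        refine setIntegral_mono_on hh_int.integrableOn
          (integrableOn_const (measure_ne_top μ A) enorm_ne_top) hA ?_
        intro ω hω
        have hω' : |ξ₁ ω - z| ≤ 1 / 16 := hω
        have h1 : |ξ₁ ω| ≤ 1 / 4 := by
          have := abs_sub_abs_le_abs_sub (ξ₁ ω) z
          linarith [abs_le.1 hω', abs_le.1 hz, this]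
        rw [hh_eq ω]
        have h2 : Real.sqrt |ξ₁ ω| ≤ 1 / 2 := by
          have : Real.sqrt |ξ₁ ω| ≤ Real.sqrt (1 / 4) := Real.sqrt_le_sqrt h1
          rwa [show Real.sqrt (1/4) = 1/2 by
            rw [show (1/4 : ℝ) = (1/2)^2 by norm_num, Real.sqrt_sq (by norm_num)]] at this
        calc Real.sqrt |ξ₁ ω| ^ 3 ≤ (1/2 : ℝ) ^ 3 :=
              pow_le_pow_left₀ (Real.sqrt_nonneg _) h2 3
          _ = 1 / 8 := by norm_num
      rwa [setIntegral_const, smul_eq_mul] at this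
    have hbAc : (∫ ω in Aᶜ, h ω ∂μ) ≤ (1 - p) * (m * Real.sqrt m) := by
      have : (∫ ω in Aᶜ, h ω ∂μ) ≤ ∫ _ in Aᶜ, (m * Real.sqrt m : ℝ) ∂μ := by
        refine setIntegral_mono_on hh_int.integrableOn
          (integrableOn_const (measure_ne_top μ Aᶜ) enorm_ne_top) hA.compl ?_
        intro ω _
        rw [hh_eq ω]
        have h2 : Real.sqrt |ξ₁ ω| ≤ Real.sqrt m := Real.sqrt_le_sqrt (habsm ω)
        calc Real.sqrt |ξ₁ ω| ^ 3 ≤ Real.sqrt m ^ 3 :=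
              pow_le_pow_left₀ (Real.sqrt_nonneg _) h2 3
          _ = m * Real.sqrt m := by rw [pow_succ, sq, hsq]
      rw [setIntegral_const, smul_eq_mul] at this; rw [← hAc]; exact this
    have hmain : 1 - K₂ / Real.sqrt m ≤ p * (1 / 8) + (1 - p) * (m * Real.sqrt m) := by
      calc 1 - K₂ / Real.sqrt m ≤ ∫ ω, h ω ∂μ := hlow
        _ = _ := hsplit
        _ ≤ _ := add_le_add hbA hbAc
    have hD : 0 < m ^ 2 - Real.sqrt m / 8 := by nlinarith
    rw [le_div_iff₀ hD]
    have key : Real.sqrt m - K₂ ≤ p * Real.sqrt m / 8 + (1 - p) * m ^ 2 := by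
      have h1 : (1 - K₂ / Real.sqrt m) * Real.sqrt m ≤
          (p * (1 / 8) + (1 - p) * (m * Real.sqrt m)) * Real.sqrt m :=
        mul_le_mul_of_nonneg_right hmain hsm.le
      calc Real.sqrt m - K₂ = (1 - K₂ / Real.sqrt m) * Real.sqrt m := by
            field_simp
        _ ≤ (p * (1 / 8) + (1 - p) * (m * Real.sqrt m)) * Real.sqrt m := h1
        _ = p * Real.sqrt m / 8 + (1 - p) * (m * (Real.sqrt m * Real.sqrt m)) := by ring
        _ = p * Real.sqrt m / 8 + (1 - p) * m ^ 2 := by rw [hsq]; ring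
    nlinarith [key, hK₂]
  · -- large z case: use the first moment
    refine le_trans ?_ (le_max_right _ _)
    push_neg at hz
    set s : ℝ := if 0 < z then 1 else -1 with hsdef
    set g : Ω → ℝ := fun ω => s * ξ₁ ω with hgdef
    have hg_int : Integrable g μ := hintξ₁.const_mul s
    -- expectation of ξ₁ is small
    set T : Ω → ℝ := fun ω => if |ξ ω| ≤ m then 0 else ξ ω with hTdef
    have hT_meas : Measurable T :=
      Measurable.ite (measurableSet_le hξ.abs measurable_const) measurable_const hξ
    have hT_int : Integrable T μ := by
      refine hint1.mono hT_meas.aestronglyMeasurable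
        (Filter.Eventually.of_forall fun ω => ?_)
      simp only [hTdef, Real.norm_eq_abs]
      split
      · simpa using abs_nonneg (ξ ω)
      · exact le_refl _
    have hsumT : ∀ ω, ξ₁ ω + T ω = ξ ω := by
      intro ω
      simp only [hξ₁def, hTdef]
      split <;> ring
    have hsum0 : (∫ ω, ξ₁ ω ∂μ) + (∫ ω, T ω ∂μ) = 0 := by
      rw [← integral_add hintξ₁ hT_int]
      simp_rw [hsumT]
      exact hmean
    have hT_bound : |∫ ω, T ω ∂μ| ≤ K₂ / m := by
      have h1 : |∫ ω, T ω ∂μ| ≤ ∫ ω, |T ω| ∂μ := by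
        simpa [Real.norm_eq_abs] using norm_integral_le_integral_norm T (μ := μ)
      have h2 : (∫ ω, |T ω| ∂μ) ≤ ∫ ω, ξ ω ^ 2 / m ∂μ := by
        refine integral_mono hT_int.abs (hint2.div_const _) fun ω => ?_
        simp only [hTdef]
        split
        · simpa using div_nonneg (sq_nonneg (ξ ω)) hm0.le
        · rename_i hc
          push_neg at hc
          rw [le_div_iff₀ hm0]
          nlinarith [abs_nonneg (ξ ω), sq_abs (ξ ω)]
      have h3 : (∫ ω, ξ ω ^ 2 / m ∂μ) = (∫ ω, ξ ω ^ 2 ∂μ) / m := integral_div _ _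
      have h4 : (∫ ω, ξ ω ^ 2 ∂μ) / m ≤ K₂ / m := by gcongr
      linarith
    have hEg : (∫ ω, g ω ∂μ) ≤ K₂ / m := by
      have : (∫ ω, g ω ∂μ) = s * ∫ ω, ξ₁ ω ∂μ := by
        simp only [hgdef]
        exact integral_const_mul s _
      rw [this]
      have hE : ∫ ω, ξ₁ ω ∂μ = -∫ ω, T ω ∂μ := by linarith
      rw [hE]
      have habsT := hT_bound
      rcases abs_le.1 habsT with ⟨hl, hr⟩
      by_cases hzp : 0 < z
      · simp only [hsdef, if_pos hzp]; linarith
      · simp only [hsdef, if_neg hzp]; linarith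
    -- lower bound
    have hglow : ∀ ω ∈ A, (1 / 8 : ℝ) ≤ g ω := by
      intro ω hω
      have hω' : |ξ₁ ω - z| ≤ 1 / 16 := hω
      rcases abs_le.1 hω' with ⟨hl, hr⟩
      by_cases hzp : 0 < z
      · have hzv : 3 / 16 < z := by rwa [abs_of_pos hzp] at hz
        simp only [hgdef, hsdef, if_pos hzp, one_mul]
        linarith
      · push_neg at hzp
        have hzv : z < -(3 / 16) := by
          rw [abs_of_nonpos hzp] at hz; linarith
        simp only [hgdef, hsdef, if_neg (not_lt.2 hzp)]
        linarith
    have hghigh : ∀ ω, (-m : ℝ) ≤ g ω := by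
      intro ω
      have h1 : |g ω| ≤ m := by
        simp only [hgdef, abs_mul]
        have : |s| = 1 := by
          simp only [hsdef]; split <;> simp
        rw [this, one_mul]
        exact habsm ω
      linarith [abs_le.1 h1 |>.1]
    have hbA : (1 / 8 : ℝ) * p ≤ ∫ ω in A, g ω ∂μ :=
      by have := setIntegral_ge_of_const_le hA (measure_ne_top μ A) hglow hg_int.integrableOn; rw [smul_eq_mul, mul_comm] at this; exact this
    have hbAc : (-m) * (1 - p) ≤ ∫ ω in Aᶜ, g ω ∂μ := by
      have := setIntegral_ge_of_const_le hA.compl (measure_ne_top μ Aᶜ)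
        (fun ω _ => hghigh ω) hg_int.integrableOn
      rw [smul_eq_mul, mul_comm] at this; rw [← hAc]; exact this
    have hsplit : (∫ ω, g ω ∂μ) = (∫ ω in A, g ω ∂μ) + ∫ ω in Aᶜ, g ω ∂μ :=
      (integral_add_compl hA hg_int).symm
    have hmain : (1 / 8 : ℝ) * p + (-m) * (1 - p) ≤ K₂ / m := by
      calc (1 / 8 : ℝ) * p + (-m) * (1 - p) ≤ (∫ ω in A, g ω ∂μ) + ∫ ω in Aᶜ, g ω ∂μ :=
            add_le_add hbA hbAc
        _ = ∫ ω, g ω ∂μ := hsplit.symm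
        _ ≤ K₂ / m := hEg
    have hD : 0 < m ^ 2 + m / 8 := by nlinarith
    rw [le_div_iff₀ hD]
    have key : p * m / 8 - m ^ 2 * (1 - p) ≤ K₂ := by
      have h1 : ((1 / 8 : ℝ) * p + (-m) * (1 - p)) * m ≤ K₂ / m * m :=
        mul_le_mul_of_nonneg_right hmain hm0.le
      calc p * m / 8 - m ^ 2 * (1 - p) = ((1 / 8 : ℝ) * p + (-m) * (1 - p)) * m := by ring
        _ ≤ K₂ / m * m := h1
        _ = K₂ := div_mul_cancel₀ _ hm0.ne'
    nlinarith [key, hK₂]
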